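/- Let σ > 1 and C > 0, and let g be a probability density on [0,∞) satisfying g(x) ≤ C e^{−σx} for all x ≥ 0. Let H(x) = x + log g(x) (with H(x) = −∞ where g(x) = 0), and define β(λ₁,λ₂) = log ∫₀^∞ e^{λ₁ y + λ₂ H(y)} e^{−y} dy, β*(x₁,x₂) = sup_{(λ₁,λ₂) ∈ ℝ²} [λ₁x₁ + λ₂x₂ − β(λ₁,λ₂)], and G_α^{(2)}(θ) = θ · sup{ α x₂ − β*(x₁,x₂) : (x₁,x₂) ∈ ℝ², x₁ ≤ 1/θ } for θ > 0. Then for every α > 1, sup_{θ ∈ (0,∞)} G_α^{(2)}(θ) ≤ C^α − 1 − α(σ−1). -/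

import Mathlib

open MeasureTheory

/-- The log-moment generating function `β(λ₁,λ₂) = log ∫₀^∞ e^{λ₁y + λ₂H(y)} e^{−y} dy`,
where `H : [0,∞) → ℝ ∪ {−∞}` is encoded through `eH = exp ∘ H : ℝ → [0,∞)` (so
`eH y = 0` exactly when `H(y) = −∞`; the `ℝ≥0∞`-power convention `0^{λ₂} = 0` for
`λ₂ > 0`, `= ∞` for `λ₂ < 0`, realizes the convention `e^{λ₂·(−∞)} = 0` for `λ₂ > 0`). -/
noncomputable def betaFn (eH : ℝ → ENNReal) (l : ℝ × ℝ) : EReal :=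
  ENNReal.log (∫⁻ y in Set.Ioi (0 : ℝ),
    ENNReal.ofReal (Real.exp (l.1 * y)) * eH y ^ l.2 * ENNReal.ofReal (Real.exp (-y)))

/-- The Legendre–Fenchel transform `β*(x) = sup_λ [⟨λ,x⟩ − β(λ)]`. -/
noncomputable def betaStar (eH : ℝ → ENNReal) (x : ℝ × ℝ) : EReal :=
  ⨆ l : ℝ × ℝ, ((l.1 * x.1 + l.2 * x.2 : ℝ) : EReal) - betaFn eH l

/-- `G_α^{(2)}(θ) = θ · sup{ αx₂ − β*(x) : x₁ ≤ 1/θ }`. -/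
noncomputable def G2 (eH : ℝ → ENNReal) (α θ : ℝ) : EReal :=
  ((θ : ℝ) : EReal) *
    ⨆ x : {p : ℝ × ℝ // p.1 ≤ θ⁻¹}, ((α * (x : ℝ × ℝ).2 : ℝ) : EReal) - betaStar eH x

lemma integral_exp_neg_mul_Ioi_aux {b : ℝ} (hb : 0 < b) :
    (∫ x in Set.Ioi (0 : ℝ), Real.exp (-(b * x))) = b⁻¹ := by
  have h := integral_comp_mul_left_Ioi (fun x => Real.exp (-x)) 0 hb
  simp only [mul_zero, integral_exp_neg_Ioi, neg_zero, Real.exp_zero, smul_eq_mul,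
    mul_one] at h
  exact h

/-- If `g` is a probability density on `[0,∞)` with `g(x) ≤ Ce^{−σx}`, `σ > 1`,
`C > 0` (so `eH x = e^{H(x)} = g(x)e^x`), then for every `α > 1`:
`sup_{θ > 0} G_α^{(2)}(θ) ≤ C^α − 1 − α(σ−1)`. -/
theorem iSup_G2_subexponential_le (σ C : ℝ) (hσ : 1 < σ) (hC : 0 < C)
    (g : ℝ → ℝ) (hg : Measurable g) (hg0 : ∀ x, 0 ≤ g x)
    (hgint : ∫ x in Set.Ioi (0 : ℝ), g x = 1)
    (hgbd : ∀ x, 0 ≤ x → g x ≤ C * Real.exp (-σ * x))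
    (α : ℝ) (hα : 1 < α) :
    (⨆ θ ∈ Set.Ioi (0 : ℝ),
        G2 (fun x => ENNReal.ofReal (g x * Real.exp x)) α θ)
      ≤ ((C ^ α - 1 - α * (σ - 1) : ℝ) : EReal) := by
  set eH : ℝ → ENNReal := fun x => ENNReal.ofReal (g x * Real.exp x) with heH
  have hα0 : (0:ℝ) < α := lt_trans one_pos hα
  set a : ℝ := 1 + α * (σ - 1) with ha
  have ha1 : (1:ℝ) < a := by nlinarith
  have ha0 : (0:ℝ) < a := lt_trans one_pos ha1
  have hσ0 : (0:ℝ) < σ := lt_trans one_pos hσ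
  -- `σ ≤ C`
  have hint_exp : IntegrableOn (fun x => C * Real.exp (-σ * x)) (Set.Ioi (0:ℝ)) :=
    (exp_neg_integrableOn_Ioi 0 hσ0).const_mul C
  have hgInt : IntegrableOn g (Set.Ioi (0:ℝ)) := by
    refine Integrable.mono hint_exp hg.aestronglyMeasurable ?_
    refine (ae_restrict_iff' measurableSet_Ioi).mpr (ae_of_all _ fun x hx => ?_)
    have h1 := hgbd x (le_of_lt hx)
    have h2 : (0:ℝ) < C * Real.exp (-σ * x) := by positivity
    rw [Real.norm_eq_abs, Real.norm_eq_abs, abs_of_nonneg (hg0 x), abs_of_pos h2]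
    exact h1
  have hCσ : σ ≤ C := by
    have h2 : (∫ x in Set.Ioi (0:ℝ), g x) ≤ ∫ x in Set.Ioi (0:ℝ), C * Real.exp (-σ * x) :=
      setIntegral_mono_on hgInt hint_exp measurableSet_Ioi (fun x hx => hgbd x (le_of_lt hx))
    have h3 : (∫ x in Set.Ioi (0:ℝ), C * Real.exp (-σ * x)) = C * σ⁻¹ := by
      rw [MeasureTheory.integral_const_mul]
      congr 1
      rw [← integral_exp_neg_mul_Ioi_aux hσ0]
      congr 1 with x
      rw [neg_mul]
    rw [hgint, h3] at h2
    have hσinv : σ * σ⁻¹ = 1 := mul_inv_cancel₀ (ne_of_gt hσ0)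
    nlinarith
  have hCα0 : (0:ℝ) < C ^ α := Real.rpow_pos_of_pos hC α
  have hCa : a ≤ C ^ α := by
    have h1 : 1 + α * (σ - 1) ≤ σ ^ α := by
      have h := one_add_mul_self_le_rpow_one_add (by linarith : (-1:ℝ) ≤ σ - 1) (le_of_lt hα)
      rwa [show (1:ℝ) + (σ - 1) = σ by ring] at h
    have h2 : σ ^ α ≤ C ^ α := Real.rpow_le_rpow (le_of_lt hσ0) hCσ (le_of_lt hα0)
    rw [ha]; linarith
  -- the key bound on `betaFn`
  have beta_le : ∀ t : ℝ, 0 ≤ t →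
      betaFn eH (-t, α) ≤ ((Real.log (C ^ α / (a + t)) : ℝ) : EReal) := by
    intro t ht
    have hat : (0:ℝ) < a + t := by linarith
    have hpt : ∀ y ∈ Set.Ioi (0:ℝ),
        ENNReal.ofReal (Real.exp ((-t, α).1 * y)) * eH y ^ (-t, α).2
            * ENNReal.ofReal (Real.exp (-y))
          ≤ ENNReal.ofReal (C ^ α * Real.exp (-((a + t) * y))) := by
      intro y hy
      have hgy : 0 ≤ g y * Real.exp y := mul_nonneg (hg0 y) (Real.exp_pos y).le
      have hstep : eH y = ENNReal.ofReal (g y * Real.exp y) := rfl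
      simp only [hstep]
      rw [ENNReal.ofReal_rpow_of_nonneg hgy (le_of_lt hα0),
        ← ENNReal.ofReal_mul (Real.exp_pos _).le,
        ← ENNReal.ofReal_mul (by positivity)]
      apply ENNReal.ofReal_le_ofReal
      have hb : g y * Real.exp y ≤ C * Real.exp ((1 - σ) * y) := by
        have h1 : g y * Real.exp y ≤ C * Real.exp (-σ * y) * Real.exp y :=
          mul_le_mul_of_nonneg_right (hgbd y (le_of_lt (Set.mem_Ioi.mp hy)))
            (Real.exp_pos y).le
        have h2 : C * Real.exp (-σ * y) * Real.exp y = C * Real.exp ((1 - σ) * y) := by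
          rw [mul_assoc, ← Real.exp_add]; congr 1; ring
        linarith
      have h1 : (g y * Real.exp y) ^ α ≤ C ^ α * Real.exp (((1 - σ) * y) * α) := by
        calc (g y * Real.exp y) ^ α
            ≤ (C * Real.exp ((1 - σ) * y)) ^ α :=
              Real.rpow_le_rpow hgy hb (le_of_lt hα0)
          _ = C ^ α * (Real.exp ((1 - σ) * y)) ^ α :=
              Real.mul_rpow hC.le (Real.exp_pos _).le
          _ = C ^ α * Real.exp (((1 - σ) * y) * α) := by rw [← Real.exp_mul]
      have hle : Real.exp ((-t, α).1 * y) * (g y * Real.exp y) ^ α * Real.exp (-y)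
          ≤ Real.exp (-t * y) * (C ^ α * Real.exp (((1 - σ) * y) * α)) * Real.exp (-y) := by
        simp only
        exact mul_le_mul_of_nonneg_right
          (mul_le_mul_of_nonneg_left h1 (Real.exp_pos _).le) (Real.exp_pos _).le
      have heq : Real.exp (-t * y) * (C ^ α * Real.exp (((1 - σ) * y) * α)) * Real.exp (-y)
          = C ^ α * Real.exp (-((a + t) * y)) := by
        have h3 : Real.exp (-t * y) * Real.exp (((1 - σ) * y) * α) * Real.exp (-y)
            = Real.exp (-((a + t) * y)) := by
          rw [← Real.exp_add, ← Real.exp_add]; congr 1; rw [ha]; ring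
        calc Real.exp (-t * y) * (C ^ α * Real.exp (((1 - σ) * y) * α)) * Real.exp (-y)
            = C ^ α * (Real.exp (-t * y) * Real.exp (((1 - σ) * y) * α) * Real.exp (-y)) := by
              ring
          _ = C ^ α * Real.exp (-((a + t) * y)) := by rw [h3]
      calc Real.exp ((-t, α).1 * y) * (g y * Real.exp y) ^ (-t, α).2 * Real.exp (-y)
          ≤ Real.exp (-t * y) * (C ^ α * Real.exp (((1 - σ) * y) * α)) * Real.exp (-y) := hle
        _ = C ^ α * Real.exp (-((a + t) * y)) := heq
    have hmeas : Measurable (fun y : ℝ => ENNReal.ofReal (C ^ α * Real.exp (-((a + t) * y)))) := by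
      apply ENNReal.measurable_ofReal.comp
      exact (Real.measurable_exp.comp ((measurable_id.const_mul (a + t)).neg)).const_mul _
    have hInt : IntegrableOn (fun y => C ^ α * Real.exp (-((a + t) * y))) (Set.Ioi (0:ℝ)) := by
      have h := (exp_neg_integrableOn_Ioi 0 hat).const_mul (C ^ α)
      simp only [neg_mul] at h
      exact h
    have key : (∫⁻ y in Set.Ioi (0:ℝ), ENNReal.ofReal (C ^ α * Real.exp (-((a + t) * y))))
        = ENNReal.ofReal (C ^ α / (a + t)) := by
      rw [← ofReal_integral_eq_lintegral_ofReal hInt (ae_of_all _ fun y => by positivity)]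
      congr 1
      rw [MeasureTheory.integral_const_mul, integral_exp_neg_mul_Ioi_aux hat, div_eq_mul_inv]
    have hlint := le_trans (setLIntegral_mono hmeas hpt) (le_of_eq key)
    unfold betaFn
    calc ENNReal.log (∫⁻ y in Set.Ioi (0:ℝ),
          ENNReal.ofReal (Real.exp ((-t, α).1 * y)) * eH y ^ (-t, α).2
            * ENNReal.ofReal (Real.exp (-y)))
        ≤ ENNReal.log (ENNReal.ofReal (C ^ α / (a + t))) := ENNReal.log_monotone hlint
      _ = ((Real.log (C ^ α / (a + t)) : ℝ) : EReal) :=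
          ENNReal.log_ofReal_of_pos (div_pos hCα0 hat)
  -- per-θ bound
  refine iSup₂_le fun θ hθ => ?_
  have hθ0 : (0:ℝ) < θ := hθ
  set t : ℝ := max 0 (θ - a) with htdef
  have ht0 : (0:ℝ) ≤ t := le_max_left _ _
  set B : ℝ := Real.log (C ^ α / (a + t)) with hB
  have hβ : betaFn eH (-t, α) ≤ ((B : ℝ) : EReal) := beta_le t ht0
  have hsup : (⨆ x : {p : ℝ × ℝ // p.1 ≤ θ⁻¹},
      ((α * (x : ℝ × ℝ).2 : ℝ) : EReal) - betaStar eH x)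
        ≤ ((t * θ⁻¹ + B : ℝ) : EReal) := by
    refine iSup_le fun x => ?_
    obtain ⟨⟨x1, x2⟩, hx⟩ := x
    simp only at hx ⊢
    have hbs : (((-t) * x1 + α * x2 - B : ℝ) : EReal) ≤ betaStar eH (x1, x2) := by
      have h1 : (((-t, α).1 * x1 + (-t, α).2 * x2 : ℝ) : EReal) - betaFn eH (-t, α)
          ≤ betaStar eH (x1, x2) :=
        le_iSup (fun l : ℝ × ℝ => ((l.1 * x1 + l.2 * x2 : ℝ) : EReal) - betaFn eH l) (-t, α)
      refine le_trans ?_ h1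
      simp only
      rw [EReal.coe_sub]
      exact EReal.sub_le_sub le_rfl hβ
    calc ((α * x2 : ℝ) : EReal) - betaStar eH (x1, x2)
        ≤ ((α * x2 : ℝ) : EReal) - (((-t) * x1 + α * x2 - B : ℝ) : EReal) :=
          EReal.sub_le_sub le_rfl hbs
      _ = ((α * x2 - ((-t) * x1 + α * x2 - B) : ℝ) : EReal) := by norm_cast
      _ ≤ ((t * θ⁻¹ + B : ℝ) : EReal) := by
          rw [EReal.coe_le_coe_iff]
          have := mul_le_mul_of_nonneg_left hx ht0
          linarith
  have hG : G2 eH α θ ≤ ((θ * (t * θ⁻¹ + B) : ℝ) : EReal) := by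
    unfold G2
    rw [EReal.coe_mul]
    exact mul_le_mul_of_nonneg_left hsup (by exact_mod_cast hθ0.le)
  refine le_trans hG ?_
  rw [EReal.coe_le_coe_iff]
  have hθB : θ * (t * θ⁻¹ + B) = t + θ * B := by
    rw [mul_add, mul_comm t θ⁻¹, ← mul_assoc, mul_inv_cancel₀ hθ0.ne', one_mul]
  rw [hθB]
  rcases le_or_gt θ a with hcase | hcase
  · have htz : t = 0 := max_eq_left (by linarith)
    have hB0 : 0 ≤ B := by
      rw [hB, htz, add_zero]
      exact Real.log_nonneg ((one_le_div ha0).mpr hCa)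
    have h1 : θ * B ≤ a * B := mul_le_mul_of_nonneg_right hcase hB0
    have h2 : B ≤ C ^ α / a - 1 := by
      rw [hB, htz, add_zero]
      exact Real.log_le_sub_one_of_pos (div_pos hCα0 ha0)
    have h3 : a * B ≤ a * (C ^ α / a - 1) := mul_le_mul_of_nonneg_left h2 ha0.le
    have h4 : a * (C ^ α / a - 1) = C ^ α - a := by field_simp
    rw [htz]
    calc 0 + θ * B = θ * B := zero_add _
      _ ≤ a * B := h1
      _ ≤ a * (C ^ α / a - 1) := h3
      _ = C ^ α - a := h4
      _ = C ^ α - 1 - α * (σ - 1) := by rw [ha]; ring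
  · have htz : t = θ - a := max_eq_right (by linarith)
    have h2 : B ≤ C ^ α / θ - 1 := by
      rw [hB, htz, show a + (θ - a) = θ by ring]
      exact Real.log_le_sub_one_of_pos (div_pos hCα0 hθ0)
    have h1 : θ * B ≤ θ * (C ^ α / θ - 1) := mul_le_mul_of_nonneg_left h2 hθ0.le
    have h5 : θ * (C ^ α / θ - 1) = C ^ α - θ := by field_simp
    rw [htz]
    calc θ - a + θ * B ≤ θ - a + (C ^ α - θ) := add_le_add_right (h1.trans_eq h5) _
      _ = C ^ α - a := by ring
      _ = C ^ α - 1 - α * (σ - 1) := by rw [ha]; ring
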